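/- Let A be a Banach algebra, I a closed two-sided ideal of A with a bounded approximate identity, J a closed two-sided ideal of A, and D̃: A → J* a continuous derivation vanishing on I. Then D̃ takes values in (I ∩ J)⊥ ⊆ J*, i.e., ⟨x, D̃(a)⟩ = 0 for all x ∈ I ∩ J and a ∈ A, and D̃ induces a continuous derivation from A/I into (J/(J ∩ I))*. -/

import Mathlib

open ContinuousLinearMap Filter Topology

namespace Paper

structure Bimod (A : Type*) [NormedRing A] [NormedAlgebra ℂ A]
    (X : Type*) [NormedAddCommGroup X] [NormedSpace ℂ X] where
  l : A → X →L[ℂ] X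
  r : A → X →L[ℂ] X
  l_mul : ∀ a b x, l (a * b) x = l a (l b x)
  r_mul : ∀ a b x, r (a * b) x = r b (r a x)
  lr : ∀ a b x, l a (r b x) = r b (l a x)

variable {A : Type*} [NormedRing A] [NormedAlgebra ℂ A]
variable {X : Type*} [NormedAddCommGroup X] [NormedSpace ℂ X]

noncomputable def Bimod.dual (M : Bimod A X) : Bimod A (X →L[ℂ] ℂ) where
  l a := (compL ℂ X X ℂ).flip (M.r a)
  r a := (compL ℂ X X ℂ).flip (M.l a)
  l_mul a b f := by ext x; simp [M.r_mul]
  r_mul a b f := by ext x; simp [M.l_mul]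
  lr a b f := by ext x; simp [M.lr]

def IsDerivation (M : Bimod A X) (D : A →L[ℂ] X) : Prop :=
  ∀ a b, D (a * b) = M.l a (D b) + M.r b (D a)

def IsInner (M : Bimod A X) (D : A →L[ℂ] X) : Prop :=
  ∃ x, ∀ a, D a = M.l a x - M.r a x

noncomputable def Bimod.restrict (M : Bimod A X) (Y : Submodule ℂ X)
    (hl : ∀ a, ∀ y ∈ Y, M.l a y ∈ Y) (hr : ∀ a, ∀ y ∈ Y, M.r a y ∈ Y) :
    Bimod A Y where
  l a := ((M.l a).comp Y.subtypeL).codRestrict Y fun y => hl a y y.2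
  r a := ((M.r a).comp Y.subtypeL).codRestrict Y fun y => hr a y y.2
  l_mul a b y := Subtype.ext (M.l_mul a b y)
  r_mul a b y := Subtype.ext (M.r_mul a b y)
  lr a b y := Subtype.ext (M.lr a b y)

noncomputable def algBimod (A : Type*) [NormedRing A] [NormedAlgebra ℂ A] : Bimod A A where
  l a := ContinuousLinearMap.mul ℂ A a
  r a := (ContinuousLinearMap.mul ℂ A).flip a
  l_mul a b x := mul_assoc a b x
  r_mul a b x := (mul_assoc x a b).symm
  lr a b x := (mul_assoc a x b).symm

/-- Lift a continuous linear map vanishing on a submodule to the quotient. -/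
noncomputable def cLiftQ {E F : Type*} [SeminormedAddCommGroup E] [NormedSpace ℂ E]
    [SeminormedAddCommGroup F] [NormedSpace ℂ F]
    (S : Submodule ℂ E) (f : E →L[ℂ] F) (hf : ∀ x ∈ S, f x = 0) :
    (E ⧸ S) →L[ℂ] F :=
  LinearMap.mkContinuous (S.liftQ (f : E →ₗ[ℂ] F) (fun x hx => hf x hx)) ‖f‖ (by
    intro q
    obtain ⟨m, rfl⟩ := Submodule.Quotient.mk_surjective S q
    refine le_of_forall_pos_le_add (fun ε hε => ?_)
    have hε' : 0 < ε / (‖f‖ + 1) := div_pos hε (by positivity)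
    obtain ⟨m', hm', hlt⟩ := Submodule.Quotient.norm_mk_lt (Submodule.Quotient.mk m : E ⧸ S) hε'
    have heq : S.liftQ (f : E →ₗ[ℂ] F) (fun x hx => hf x hx) (Submodule.Quotient.mk m)
        = f m' := by rw [← hm']; rfl
    rw [heq]
    calc ‖f m'‖ ≤ ‖f‖ * ‖m'‖ := f.le_opNorm m'
      _ ≤ ‖f‖ * (‖(Submodule.Quotient.mk m : E ⧸ S)‖ + ε / (‖f‖ + 1)) :=
          mul_le_mul_of_nonneg_left hlt.le (norm_nonneg f)
      _ = ‖f‖ * ‖(Submodule.Quotient.mk m : E ⧸ S)‖ + ‖f‖ * (ε / (‖f‖ + 1)) := by ring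
      _ ≤ ‖f‖ * ‖(Submodule.Quotient.mk m : E ⧸ S)‖ + ε := by
          have : ‖f‖ * (ε / (‖f‖ + 1)) ≤ ε := by
            rw [mul_div_assoc']
            exact (div_le_iff₀ (by positivity)).2 (by nlinarith [norm_nonneg f, hε.le])
          linarith)

@[simp] theorem cLiftQ_mk {E F : Type*} [SeminormedAddCommGroup E] [NormedSpace ℂ E]
    [SeminormedAddCommGroup F] [NormedSpace ℂ F]
    (S : Submodule ℂ E) (f : E →L[ℂ] F) (hf : ∀ x ∈ S, f x = 0) (x : E) :
    cLiftQ S f hf (Submodule.Quotient.mk x) = f x := rfl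

theorem cLiftQ_norm_le {E F : Type*} [SeminormedAddCommGroup E] [NormedSpace ℂ E]
    [SeminormedAddCommGroup F] [NormedSpace ℂ F]
    (S : Submodule ℂ E) (f : E →L[ℂ] F) (hf : ∀ x ∈ S, f x = 0) :
    ‖cLiftQ S f hf‖ ≤ ‖f‖ :=
  LinearMap.mkContinuous_norm_le _ (norm_nonneg f) _

noncomputable def idealBimod (I : Submodule ℂ A)
    (hL : ∀ a, ∀ x ∈ I, a * x ∈ I) (hR : ∀ a, ∀ x ∈ I, x * a ∈ I) :
    Bimod A I where
  l a := ((ContinuousLinearMap.mul ℂ A a).comp I.subtypeL).codRestrict I fun x => hL a x x.2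
  r a := (((ContinuousLinearMap.mul ℂ A).flip a).comp I.subtypeL).codRestrict I fun x => hR a x x.2
  l_mul a b x := Subtype.ext (mul_assoc a b (x : A))
  r_mul a b x := Subtype.ext (mul_assoc (x : A) a b).symm
  lr a b x := Subtype.ext (mul_assoc a (x : A) b).symm

theorem stmt_18
    {A : Type*} [NormedRing A] [NormedAlgebra ℂ A] [CompleteSpace A]
    (I J : Submodule ℂ A)
    (hIc : IsClosed (I : Set A)) (hJc : IsClosed (J : Set A))
    (hIL : ∀ a : A, ∀ x ∈ I, a * x ∈ I) (hIR : ∀ a : A, ∀ x ∈ I, x * a ∈ I)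
    (hJL : ∀ a : A, ∀ x ∈ J, a * x ∈ J) (hJR : ∀ a : A, ∀ x ∈ J, x * a ∈ J)
    -- $I$ has a bounded approximate identity
    (ι : Type*) (p : Filter ι) [p.NeBot] (e : ι → ↥I)
    (hb : ∃ C : ℝ, ∀ i, ‖e i‖ ≤ C)
    (hai : ∀ x : ↥I, Tendsto (fun i => (e i : A) * (x : A)) p (𝓝 (x : A)) ∧
                     Tendsto (fun i => (x : A) * (e i : A)) p (𝓝 (x : A)))
    (D : A →L[ℂ] (↥J →L[ℂ] ℂ))
    (hD : IsDerivation (idealBimod J hJL hJR).dual D)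
    (hDI : ∀ x : A, x ∈ I → D x = 0) :
    -- $D$ takes values in $(I ∩ J)^⊥$
    (∀ (a : A) (x : ↥J), (x : A) ∈ I → D a x = 0) ∧
    -- and induces a continuous map $A/I → (J/(J ∩ I))^*$
    ∃ D' : (A ⧸ I) →L[ℂ] ((↥J ⧸ (I.comap J.subtype)) →L[ℂ] ℂ),
      ∀ (a : A) (y : ↥J),
        D' (I.mkQ a) (Submodule.Quotient.mk y) = D a y := by
  -- Key computation: for z ∈ I, a ∈ A, y ∈ J, D a (y * z) = 0.
  have key : ∀ (a z : A), z ∈ I → ∀ (y : ↥J) (hyz : (y : A) * z ∈ J),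
      D a (⟨(y : A) * z, hyz⟩ : ↥J) = 0 := by
    intro a z hz y hyz
    have h1 : D (z * a) = 0 := hDI _ (hIR a z hz)
    have h2 : D z = 0 := hDI z hz
    have h3 := hD z a
    rw [h1, h2, map_zero, add_zero] at h3
    have := congrArg (fun f : ↥J →L[ℂ] ℂ => f y) h3.symm
    simp [Bimod.dual, idealBimod] at this
    exact this
  have part1 : ∀ (a : A) (x : ↥J), (x : A) ∈ I → D a x = 0 := by
    intro a x hx
    -- x * e i → x in J, and D a (x * e i) = 0 for all i.
    have htd : Tendsto (fun i => ((x : A) * (e i : A))) p (𝓝 (x : A)) :=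
      (hai ⟨(x : A), hx⟩).2
    have hmem : ∀ i, (x : A) * (e i : A) ∈ J := fun i => hJR (e i) x x.2
    have htdJ : Tendsto (fun i => (⟨(x : A) * (e i : A), hmem i⟩ : ↥J)) p (𝓝 x) := by
      rw [tendsto_subtype_rng]
      exact htd
    have hcont : Tendsto (fun i => D a (⟨(x : A) * (e i : A), hmem i⟩ : ↥J)) p
        (𝓝 (D a x)) := ((D a).continuous.tendsto x).comp htdJ
    have hzero : (fun i => D a (⟨(x : A) * (e i : A), hmem i⟩ : ↥J)) = fun _ => (0 : ℂ) := by
      funext i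
      exact key a (e i) (e i).2 x (hmem i)
    rw [hzero] at hcont
    exact (tendsto_nhds_unique tendsto_const_nhds hcont).symm
  refine ⟨part1, ?_⟩
  set K : Submodule ℂ ↥J := I.comap J.subtype with hK
  -- lift each D a through K
  have hval : ∀ a : A, ∀ y ∈ K, D a y = 0 := fun a y hy => part1 a y hy
  -- the linear map A → (J/K)*
  let Φlin : A →ₗ[ℂ] ((↥J ⧸ K) →L[ℂ] ℂ) :=
    { toFun := fun a => cLiftQ K (D a) (hval a)
      map_add' := by
        intro a b
        ext q
        obtain ⟨y, rfl⟩ := Submodule.Quotient.mk_surjective K q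
        simp
      map_smul' := by
        intro c a
        ext q
        obtain ⟨y, rfl⟩ := Submodule.Quotient.mk_surjective K q
        simp }
  obtain ⟨C, hC0, hC⟩ := ContinuousLinearMap.bound (𝕜 := ℂ) (𝕜₂ := ℂ) (E := A)
    (F := ↥J →L[ℂ] ℂ) (σ₁₂ := RingHom.id ℂ) D
  have hΦbound : ∀ a : A, ‖Φlin a‖ ≤ C * ‖a‖ := by
    intro a
    have h1 : ‖Φlin a‖ ≤ ‖D a‖ := cLiftQ_norm_le K (D a) (hval a)
    exact h1.trans (hC a)
  let Φ : A →L[ℂ] ((↥J ⧸ K) →L[ℂ] ℂ) := LinearMap.mkContinuous (𝕜 := ℂ) (E := A)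
    (F := (↥J ⧸ K) →L[ℂ] ℂ) Φlin C hΦbound
  have hΦI : ∀ x ∈ I, Φ x = 0 := by
    intro x hx
    ext q
    obtain ⟨y, rfl⟩ := Submodule.Quotient.mk_surjective K q
    have : D x = 0 := hDI x hx
    simp [Φ, Φlin, this]
  refine ⟨cLiftQ (E := A) (F := (↥J ⧸ K) →L[ℂ] ℂ) I Φ hΦI, fun a y => ?_⟩
  have : I.mkQ a = Submodule.Quotient.mk a := rfl
  rw [this, cLiftQ_mk]
  rfl

end Paper
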